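/- Let C = {c_1, …, c_m} be a set of clauses over boolean variables x_1, …, x_n, where each clause is a set of literals containing no variable together with its negation. Define the semi-automaton A = ({a,b,c}, Q, δ) with Q = { q_{i,j} : 1 ≤ i ≤ m, 0 ≤ j ≤ n+1 } ∪ {q_f} and transitions: for 1 ≤ i ≤ m and 1 ≤ j ≤ n, δ(q_{i,j}, b) = q_f if x_j ∈ c_i and δ(q_{i,j}, b) = q_{i,j+1} otherwise; δ(q_{i,j}, c) = q_f if ¬x_j ∈ c_i and δ(q_{i,j}, c) = q_{i,j+1} otherwise; δ(q_{i,j}, a) = q_{i,j} if j ∈ {0,1} and δ(q_{i,j}, a) = q_f if j ∉ {0,1}; δ(q_{i,n+1}, b) = δ(q_{i,n+1}, c) = q_{i,n+1}; δ(q_{i,0}, b) = q_{i,0}; δ(q_{i,0}, c) = q_{i,1}; and q_f is a sink state. Then A is weakly acyclic, and A has a synchronizing word in the language (a+b)*c(b+c)* (a word of the form u c v with u ∈ {a,b}* and v ∈ {b,c}*) if and only if there is a truth assignment to x_1, …, x_n satisfying every clause of C. -/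

import Mathlib

/-- A three-letter alphabet `{a, b, c}`. -/
inductive ABC : Type
  | a | b | c
  deriving DecidableEq

instance : Fintype ABC where
  elems := {ABC.a, ABC.b, ABC.c}
  complete := fun x => by cases x <;> simp

/-- The transition function extended to words: `δ*(q, u)`. -/
def deltaStar {Q A : Type*} (δ : Q → A → Q) (q : Q) (u : List A) : Q :=
  u.foldl δ q

/-- A complete deterministic semi-automaton is weakly acyclic if all simple
cycles are self-loops. -/
def WeaklyAcyclic {Q A : Type*} (δ : Q → A → Q) : Prop :=
  ∀ (q : Q) (u : List A), u ≠ [] → deltaStar δ q u = q → ∀ x ∈ u, δ q x = q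

/-- The SAT reduction automaton for the constraint language `(a+b)*c(b+c)*`.

Clauses are encoded by `C : Fin m → Fin n → Option Bool`, where
`C i j = some true` means the literal `x_{j+1}` occurs in clause `c_{i+1}`,
`C i j = some false` means `¬x_{j+1}` occurs in it, and `C i j = none` means
neither occurs (so no clause contains a variable together with its negation).

States are `Option (Fin m × Fin (n+2))`, where `some (i, j)` encodes the state
`q_{i+1, j}` (so the second index ranges over `0, 1, …, n+1` as in the paper)
and `none` encodes the sink state `q_f`.

Transitions: for `1 ≤ j ≤ n` (whose variable `x_j` has `Fin n` index `j - 1`),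
`δ(q_{i,j}, b) = q_f` if `x_j ∈ c_i` and `q_{i,j+1}` otherwise;
`δ(q_{i,j}, c) = q_f` if `¬x_j ∈ c_i` and `q_{i,j+1}` otherwise;
`δ(q_{i,j}, a) = q_{i,j}` if `j ∈ {0,1}` and `q_f` otherwise;
`q_{i,n+1}` is fixed by `b` and `c`; `δ(q_{i,0}, b) = q_{i,0}`;
`δ(q_{i,0}, c) = q_{i,1}`; `q_f` is a sink state. -/
def satDelta {m n : ℕ} (C : Fin m → Fin n → Option Bool) :
    Option (Fin m × Fin (n + 2)) → ABC → Option (Fin m × Fin (n + 2))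
  | none, _ => none
  | some (i, j), ABC.a => if j.val ≤ 1 then some (i, j) else none
  | some (i, j), ABC.b =>
      if h0 : j.val = 0 then some (i, j)
      else if h : j.val ≤ n then
        if C i ⟨j.val - 1, by omega⟩ = some true then none
        else some (i, ⟨j.val + 1, by omega⟩)
      else some (i, j)
  | some (i, j), ABC.c =>
      if h0 : j.val = 0 then some (i, ⟨1, by omega⟩)
      else if h : j.val ≤ n then
        if C i ⟨j.val - 1, by omega⟩ = some false then none
        else some (i, ⟨j.val + 1, by omega⟩)
      else some (i, j)

namespace SatRed

variable {m n : ℕ} (C : Fin m → Fin n → Option Bool)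

lemma ds_nil {Q A : Type*} (δ : Q → A → Q) (q : Q) : deltaStar δ q [] = q := rfl

lemma ds_cons {Q A : Type*} (δ : Q → A → Q) (q : Q) (x : A) (u : List A) :
    deltaStar δ q (x :: u) = deltaStar δ (δ q x) u := rfl

lemma ds_append {Q A : Type*} (δ : Q → A → Q) (q : Q) (u v : List A) :
    deltaStar δ q (u ++ v) = deltaStar δ (deltaStar δ q u) v :=
  List.foldl_append ..

lemma sd_none (x : ABC) : satDelta C none x = none := by cases x <;> rfl

lemma ds_none (u : List ABC) : deltaStar (satDelta C) none u = none := by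
  induction u with
  | nil => rfl
  | cons x u ih => rw [ds_cons, sd_none]; exact ih

lemma sd_a {i : Fin m} {j : Fin (n+2)} (h : j.val ≤ 1) :
    satDelta C (some (i, j)) ABC.a = some (i, j) := by
  simp [satDelta, h]

lemma sd_a' {i : Fin m} {j : Fin (n+2)} (h : 1 < j.val) :
    satDelta C (some (i, j)) ABC.a = none := by
  simp [satDelta]; omega

lemma sd_b0 {i : Fin m} {j : Fin (n+2)} (h : j.val = 0) :
    satDelta C (some (i, j)) ABC.b = some (i, j) := by
  simp [satDelta, h]

lemma sd_c0 {i : Fin m} {j : Fin (n+2)} (h : j.val = 0) :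
    satDelta C (some (i, j)) ABC.c = some (i, ⟨1, by omega⟩) := by
  simp [satDelta, h]

lemma sd_b_sink {i : Fin m} {j : Fin (n+2)} (h0 : j.val ≠ 0) (h : j.val ≤ n)
    (hc : C i ⟨j.val - 1, by omega⟩ = some true) :
    satDelta C (some (i, j)) ABC.b = none := by
  simp [satDelta, h0, h, hc]

lemma sd_b_move {i : Fin m} {j : Fin (n+2)} (h0 : j.val ≠ 0) (h : j.val ≤ n)
    (hc : C i ⟨j.val - 1, by omega⟩ ≠ some true) :
    satDelta C (some (i, j)) ABC.b = some (i, ⟨j.val + 1, by omega⟩) := by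
  simp [satDelta, h0, h, hc]

lemma sd_c_sink {i : Fin m} {j : Fin (n+2)} (h0 : j.val ≠ 0) (h : j.val ≤ n)
    (hc : C i ⟨j.val - 1, by omega⟩ = some false) :
    satDelta C (some (i, j)) ABC.c = none := by
  simp [satDelta, h0, h, hc]

lemma sd_c_move {i : Fin m} {j : Fin (n+2)} (h0 : j.val ≠ 0) (h : j.val ≤ n)
    (hc : C i ⟨j.val - 1, by omega⟩ ≠ some false) :
    satDelta C (some (i, j)) ABC.c = some (i, ⟨j.val + 1, by omega⟩) := by
  simp [satDelta, h0, h, hc]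

lemma sd_b_top {i : Fin m} {j : Fin (n+2)} (h0 : j.val ≠ 0) (h : ¬ j.val ≤ n) :
    satDelta C (some (i, j)) ABC.b = some (i, j) := by
  simp [satDelta, h0, h]

lemma sd_c_top {i : Fin m} {j : Fin (n+2)} (h0 : j.val ≠ 0) (h : ¬ j.val ≤ n) :
    satDelta C (some (i, j)) ABC.c = some (i, j) := by
  simp [satDelta, h0, h]

def rk {m n : ℕ} : Option (Fin m × Fin (n+2)) → ℕ
  | none => n + 2
  | some (_, j) => j.val

lemma rk_step (q : Option (Fin m × Fin (n+2))) (x : ABC) :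
    satDelta C q x = q ∨ rk q < rk (satDelta C q x) := by
  match q with
  | none => left; exact sd_none C x
  | some (i, j) =>
    have hj : j.val < n + 2 := j.isLt
    cases x with
    | a =>
      by_cases h : j.val ≤ 1
      · left; exact sd_a C h
      · right; rw [sd_a' C (by omega)]; simp [rk]
    | b =>
      by_cases h0 : j.val = 0
      · left; exact sd_b0 C h0
      by_cases h : j.val ≤ n
      · by_cases hc : C i ⟨j.val - 1, by omega⟩ = some true
        · right; rw [sd_b_sink C h0 h hc]; simp [rk]
        · right; rw [sd_b_move C h0 h hc]; simp [rk]
      · left; exact sd_b_top C h0 h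
    | c =>
      by_cases h0 : j.val = 0
      · right; rw [sd_c0 C h0]; show j.val < 1; omega
      by_cases h : j.val ≤ n
      · by_cases hc : C i ⟨j.val - 1, by omega⟩ = some false
        · right; rw [sd_c_sink C h0 h hc]; simp [rk]
        · right; rw [sd_c_move C h0 h hc]; simp [rk]
      · left; exact sd_c_top C h0 h

lemma rk_mono (u : List ABC) : ∀ q : Option (Fin m × Fin (n+2)),
    rk q ≤ rk (deltaStar (satDelta C) q u) := by
  induction u with
  | nil => intro q; exact le_refl _
  | cons x u ih =>
    intro q
    rw [ds_cons]
    rcases rk_step C q x with h | h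
    · rw [h]; exact ih q
    · exact le_of_lt (lt_of_lt_of_le h (ih _))

lemma wa : WeaklyAcyclic (satDelta C) := by
  intro q u _ hcyc
  induction u generalizing q with
  | nil => intro x hx; simp at hx
  | cons y u ih =>
    intro x hx
    rw [ds_cons] at hcyc
    have h1 := rk_step C q y
    have h2 := rk_mono C u (satDelta C q y)
    rw [hcyc] at h2
    have hy : satDelta C q y = q := by
      rcases h1 with h | h
      · exact h
      · omega
    rw [hy] at hcyc
    rcases List.mem_cons.mp hx with rfl | hx
    · exact hy
    · exact ih q (List.ne_nil_of_mem hx) hcyc x hx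
/-- `u ∈ {a,b}*` fixes `q_{i,0}`. -/
lemma fix0 (u : List ABC) (hu : ∀ x ∈ u, x = ABC.a ∨ x = ABC.b) (i : Fin m)
    (j : Fin (n+2)) (hj : j.val = 0) :
    deltaStar (satDelta C) (some (i, j)) u = some (i, j) := by
  induction u with
  | nil => rfl
  | cons x u ih =>
    rw [ds_cons]
    rcases hu x (by simp) with rfl | rfl
    · rw [sd_a C (by omega)]; exact ih (fun y hy => hu y (by simp [hy]))
    · rw [sd_b0 C hj]; exact ih (fun y hy => hu y (by simp [hy]))

/-- If a `{b,c}` word sinks a state at position `j ≥ 1`, some clause literal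
is matched by the corresponding letter. -/
lemma sink_letter (v : List ABC) (hv : ∀ x ∈ v, x = ABC.b ∨ x = ABC.c) :
    ∀ (jn : ℕ) (h1 : 1 ≤ jn) (h2 : jn ≤ n + 1) (i : Fin m),
    deltaStar (satDelta C) (some (i, ⟨jn, by omega⟩)) v = none →
    ∃ (k : Fin n) (t : ℕ) (ht : t < v.length), jn + t = k.val + 1 ∧
      C i k = some (decide (v.get ⟨t, ht⟩ = ABC.b)) := by
  induction v with
  | nil => intro jn h1 h2 i h; exact absurd h (by simp [ds_nil])
  | cons x v ih =>
    intro jn h1 h2 i h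
    rw [ds_cons] at h
    have hx := hv x (by simp)
    by_cases hn : jn ≤ n
    · rcases hx with rfl | rfl
      · by_cases hc : C i ⟨jn - 1, by omega⟩ = some true
        · refine ⟨⟨jn - 1, by omega⟩, 0, by simp, by simp; omega, ?_⟩
          simpa using hc
        · rw [sd_b_move C (by simp; omega) hn hc] at h
          obtain ⟨k, t, ht, hkt, hC⟩ :=
            ih (fun y hy => hv y (by simp [hy])) (jn + 1) (by omega) (by omega) i h
          exact ⟨k, t + 1, by simpa using ht, by omega, hC⟩
      · by_cases hc : C i ⟨jn - 1, by omega⟩ = some false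
        · refine ⟨⟨jn - 1, by omega⟩, 0, by simp, by simp; omega, ?_⟩
          simpa using hc
        · rw [sd_c_move C (by simp; omega) hn hc] at h
          obtain ⟨k, t, ht, hkt, hC⟩ :=
            ih (fun y hy => hv y (by simp [hy])) (jn + 1) (by omega) (by omega) i h
          exact ⟨k, t + 1, by simpa using ht, by omega, hC⟩
    · have hself : satDelta C (some (i, (⟨jn, by omega⟩ : Fin (n+2)))) x
          = some (i, ⟨jn, by omega⟩) := by
        rcases hx with rfl | rfl
        · exact sd_b_top C (by simp; omega) hn
        · exact sd_c_top C (by simp; omega) hn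
      rw [hself] at h
      obtain ⟨k, t, ht, hkt, hC⟩ :=
        ih (fun y hy => hv y (by simp [hy])) jn h1 h2 i h
      have : k.val < n := k.isLt
      omega
/-- The assignment word sinks a surviving state once a satisfied literal is met. -/
lemma run (β : Fin n → Bool) (i : Fin m) :
    ∀ (d s : ℕ) (hsd : s + d = n),
    (∃ k : Fin n, s ≤ k.val ∧ C i k = some (β k)) →
    deltaStar (satDelta C) (some (i, ⟨s + 1, by omega⟩))
      ((List.ofFn (fun k : Fin n => if β k then ABC.b else ABC.c)).drop s) = none := by
  intro d
  induction d with
  | zero =>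
    intro s hs ⟨k, hk, _⟩
    have := k.isLt
    omega
  | succ d ih =>
    intro s hs ⟨k, hk, hCk⟩
    have hsn : s < n := by omega
    set f : Fin n → ABC := fun k => if β k then ABC.b else ABC.c with hf
    have hlen : s < (List.ofFn f).length := by simpa using hsn
    rw [List.drop_eq_getElem_cons hlen, ds_cons]
    have hget : (List.ofFn f)[s] = f ⟨s, hsn⟩ := List.getElem_ofFn ..
    by_cases hCs : C i ⟨s, hsn⟩ = some (β ⟨s, hsn⟩)
    · -- sink now
      have hsink : satDelta C (some (i, (⟨s + 1, by omega⟩ : Fin (n+2)))) ((List.ofFn f)[s]) = none := by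
        rw [hget, hf]
        by_cases hb : β ⟨s, hsn⟩
        · simp only [hb, if_true]
          exact sd_b_sink C (by simp) (by simp; omega) (by simpa [hb] using hCs)
        · simp only [hb, if_false]
          exact sd_c_sink C (by simp) (by simp; omega) (by simpa [hb] using hCs)
      rw [hsink]
      exact ds_none C _
    · -- move on
      have hk' : s + 1 ≤ k.val := by
        rcases Nat.lt_or_ge s k.val with h | h
        · omega
        · have : k = ⟨s, hsn⟩ := Fin.ext (by simp; omega)
          rw [this] at hCk; exact absurd hCk hCs
      have hmove : satDelta C (some (i, (⟨s + 1, by omega⟩ : Fin (n+2)))) ((List.ofFn f)[s])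
          = some (i, ⟨s + 2, by omega⟩) := by
        rw [hget, hf]
        by_cases hb : β ⟨s, hsn⟩
        · simp only [hb, if_true]
          have := sd_b_move C (i := i) (j := ⟨s + 1, by omega⟩) (by simp) (by simp; omega)
            (by simp; intro h; exact hCs (by simpa [hb] using h))
          simpa using this
        · simp only [hb, if_false]
          have := sd_c_move C (i := i) (j := ⟨s + 1, by omega⟩) (by simp) (by simp; omega)
            (by simp; intro h; exact hCs (by simpa [hb] using h))
          simpa using this
      rw [hmove]
      have := ih (s + 1) (by omega) ⟨k, hk', hCk⟩
      simpa using this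
end SatRed

/-- The SAT reduction automaton is weakly acyclic, and it has a synchronizing
word in the language `(a+b)*c(b+c)*` iff the clause set encoded by `C` is
satisfiable (an assignment `β` satisfies clause `c_i` iff some literal of
`c_i` is made true, i.e., `∃ j, C i j = some (β j)`). -/
theorem sat_reduction_abStar_c_bcStar {m n : ℕ}
    (C : Fin m → Fin n → Option Bool) :
    WeaklyAcyclic (satDelta C) ∧
    ((∃ u v : List ABC, (∀ x ∈ u, x = ABC.a ∨ x = ABC.b) ∧
        (∀ x ∈ v, x = ABC.b ∨ x = ABC.c) ∧
        ∃ q : Option (Fin m × Fin (n + 2)),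
          ∀ p : Option (Fin m × Fin (n + 2)),
            deltaStar (satDelta C) p (u ++ ABC.c :: v) = q) ↔
      ∃ β : Fin n → Bool, ∀ i : Fin m, ∃ j : Fin n, C i j = some (β j)) := by
  constructor
  · exact SatRed.wa C
  constructor
  · rintro ⟨u, v, hu, hv, q, hq⟩
    have hqn : q = none := by
      have := hq none
      rw [SatRed.ds_none] at this
      exact this.symm
    refine ⟨fun k => decide (v.getD k.val ABC.c = ABC.b), fun i => ?_⟩
    have h0 := hq (some (i, ⟨0, by omega⟩))
    rw [hqn, SatRed.ds_append, SatRed.fix0 C u hu i _ rfl, SatRed.ds_cons,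
      SatRed.sd_c0 C rfl] at h0
    obtain ⟨k, t, ht, hkt, hC⟩ := SatRed.sink_letter C v hv 1 le_rfl (by omega) i h0
    refine ⟨k, ?_⟩
    have hkt' : k.val = t := by omega
    show C i k = some (decide (v.getD k.val ABC.c = ABC.b))
    rw [hkt', List.getD_eq_getElem v ABC.c ht]
    simpa [List.get_eq_getElem] using hC
  · rintro ⟨β, hβ⟩
    refine ⟨[ABC.a, ABC.b, ABC.a],
      List.ofFn (fun k : Fin n => if β k then ABC.b else ABC.c),
      by intro x hx; fin_cases hx <;> simp, ?_, none, ?_⟩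
    · intro x hx
      rw [List.mem_ofFn] at hx
      obtain ⟨k, rfl⟩ := hx
      by_cases hb : β k <;> simp [hb]
    · intro p
      match p with
      | none => exact SatRed.ds_none C _
      | some (i, j) =>
        obtain ⟨k0, hk0⟩ := hβ i
        have hn1 : 1 ≤ n := by have := k0.isLt; omega
        rw [SatRed.ds_append]
        by_cases h0 : j.val = 0
        · rw [SatRed.fix0 C _ (by intro x hx; fin_cases hx <;> simp) i j h0,
            SatRed.ds_cons, SatRed.sd_c0 C h0]
          have := SatRed.run C β i n 0 (by omega) ⟨k0, Nat.zero_le _, hk0⟩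
          simpa using this
        · have hpre : deltaStar (satDelta C) (some (i, j)) [ABC.a, ABC.b, ABC.a] = none := by
            by_cases h1 : j.val = 1
            · rw [SatRed.ds_cons, SatRed.sd_a C (by omega)]
              by_cases hc : C i ⟨j.val - 1, by omega⟩ = some true
              · rw [SatRed.ds_cons, SatRed.sd_b_sink C h0 (by omega) hc]
                exact SatRed.ds_none C _
              · rw [SatRed.ds_cons, SatRed.sd_b_move C h0 (by omega) hc,
                  SatRed.ds_cons, SatRed.sd_a' C (by show 1 < j.val + 1; omega)]
                rfl
            · rw [SatRed.ds_cons, SatRed.sd_a' C (by omega)]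
              exact SatRed.ds_none C _
          rw [hpre, SatRed.ds_cons, SatRed.sd_none]
          exact SatRed.ds_none C _
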